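/- For every node v of a complete and decomposable SPN, val(v) := Σ over assignments of scope(v) of f_v equals: 1 if v is an indicator leaf; ∏_{c ∈ Ch(v)} val(c) if v is a product node; and Σ_{c ∈ Ch(v)} w_{v,c}·val(c) if v is a sum node. -/

import Mathlib

noncomputable section

open Finset

/-- A Sum-Product Network over `N` Boolean variables: leaves are indicators
`I[X_i = b]`, internal nodes are weighted sums and products. -/
inductive SPN (N : ℕ) where
  | leaf (i : Fin N) (b : Bool)
  | sum (k : ℕ) (w : Fin k → ℝ) (ch : Fin k → SPN N)
  | prod (k : ℕ) (ch : Fin k → SPN N)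

namespace SPN

variable {N : ℕ}

/-- The network polynomial, evaluated at a complete assignment. -/
def eval : SPN N → (Fin N → Bool) → ℝ
  | .leaf i b, x => if x i = b then 1 else 0
  | .sum _ w ch, x => ∑ j, w j * eval (ch j) x
  | .prod _ ch, x => ∏ j, eval (ch j) x

/-- The scope of a node: the variables appearing among its descendant indicators. -/
def scope : SPN N → Finset (Fin N)
  | .leaf i _ => {i}
  | .sum _ _ ch => univ.biUnion fun j => scope (ch j)
  | .prod _ ch => univ.biUnion fun j => scope (ch j)

/-- Size of an SPN: number of nodes plus number of edges. -/
def size : SPN N → ℕ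
  | .leaf _ _ => 1
  | .sum k _ ch => 1 + k + ∑ j, size (ch j)
  | .prod k ch => 1 + k + ∑ j, size (ch j)

/-- Completeness: all children of every sum node have the same scope. -/
def complete : SPN N → Prop
  | .leaf _ _ => True
  | .sum _ _ ch => (∀ i j, scope (ch i) = scope (ch j)) ∧ ∀ j, complete (ch j)
  | .prod _ ch => ∀ j, complete (ch j)

/-- Decomposability: children of every product node have pairwise disjoint scopes. -/
def decomposable : SPN N → Prop
  | .leaf _ _ => True
  | .sum _ _ ch => ∀ j, decomposable (ch j)
  | .prod _ ch =>
      (∀ i j, i ≠ j → Disjoint (scope (ch i)) (scope (ch j))) ∧ ∀ j, decomposable (ch j)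

/-- The set of indicators `(variable, value)` appearing among descendants. -/
def indicators : SPN N → Finset (Fin N × Bool)
  | .leaf i b => {(i, b)}
  | .sum _ _ ch => univ.biUnion fun j => indicators (ch j)
  | .prod _ ch => univ.biUnion fun j => indicators (ch j)

/-- Consistency: no variable appears negated in one child of a product node and
non-negated in another child. -/
def consistent : SPN N → Prop
  | .leaf _ _ => True
  | .sum _ _ ch => ∀ j, consistent (ch j)
  | .prod _ ch =>
      (∀ i j X, i ≠ j → (X, true) ∈ indicators (ch i) →
        (X, false) ∈ indicators (ch j) → False) ∧ ∀ j, consistent (ch j)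

/-- All sum-node weights are nonnegative. -/
def nonnegWeights : SPN N → Prop
  | .leaf _ _ => True
  | .sum _ w ch => (∀ j, 0 ≤ w j) ∧ ∀ j, nonnegWeights (ch j)
  | .prod _ ch => ∀ j, nonnegWeights (ch j)

/-- Weight-normalized: at every sum node the weights are nonnegative and sum to 1. -/
def weightNormalized : SPN N → Prop
  | .leaf _ _ => True
  | .sum _ w ch => (∀ j, 0 ≤ w j) ∧ (∑ j, w j) = 1 ∧ ∀ j, weightNormalized (ch j)
  | .prod _ ch => ∀ j, weightNormalized (ch j)

/-- Extend an assignment of the scope variables to a complete assignment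
(variables outside the scope are set to `false`; `eval` does not depend on them). -/
def extendScope (S : SPN N) (y : {i // i ∈ scope S} → Bool) : Fin N → Bool :=
  fun i => if h : i ∈ scope S then y ⟨i, h⟩ else false

/-- The sum of the network polynomial of `S` over all assignments of the
variables in `scope S`. -/
def val (S : SPN N) : ℝ :=
  ∑ y : {i // i ∈ scope S} → Bool, eval S (extendScope S y)

/-- The probability distribution induced by an SPN:
`Pr S x = f_S(x) / Σ_y f_S(y)`, the sum ranging over assignments of the scope. -/
def Pr (S : SPN N) (x : Fin N → Bool) : ℝ := eval S x / val S

end SPN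
namespace SPN

variable {N : ℕ}

/-- A monomial: a coefficient together with a multiset of indicators. -/
abbrev Monomial (N : ℕ) := ℝ × Multiset (Fin N × Bool)

/-- Product of two sum-of-products expansions. -/
def mulMono (a b : Multiset (Monomial N)) : Multiset (Monomial N) :=
  a.bind fun m => b.map fun m' => (m.1 * m'.1, m.2 + m'.2)

/-- The fully expanded sum-of-products form of the network polynomial,
obtained by distributing products over sums. -/
def monomials : SPN N → Multiset (Monomial N)
  | .leaf i b => {(1, {(i, b)})}
  | .sum _ w ch => ∑ j, (monomials (ch j)).map fun m => (w j * m.1, m.2)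
  | .prod k ch => (List.ofFn fun j : Fin k => monomials (ch j)).foldr mulMono {(1, 0)}

/-- Two SPNs have the same DAG structure (only sum-node weights may differ). -/
def sameShape : SPN N → SPN N → Prop
  | .leaf i b, .leaf i' b' => i = i' ∧ b = b'
  | .sum k _ ch, .sum k' _ ch' => ∃ h : k = k', ∀ j, sameShape (ch j) (ch' (Fin.cast h j))
  | .prod k ch, .prod k' ch' => ∃ h : k = k', ∀ j, sameShape (ch j) (ch' (Fin.cast h j))
  | _, _ => False

/-- `IsChild c p`: `c` is a child of `p`. -/
inductive IsChild : SPN N → SPN N → Prop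
  | sum {k : ℕ} {w : Fin k → ℝ} {ch : Fin k → SPN N} (j : Fin k) :
      IsChild (ch j) (.sum k w ch)
  | prod {k : ℕ} {ch : Fin k → SPN N} (j : Fin k) :
      IsChild (ch j) (.prod k ch)

/-- `Descendant d v`: `d` is a (weak) descendant of `v`. -/
def Descendant : SPN N → SPN N → Prop := Relation.ReflTransGen IsChild

/-- A decision stump: a univariate distribution `p·I[X=1] + (1-p)·I[X=0]`
over a single Boolean variable, used as terminal node of a normal SPN. -/
def isStump : SPN N → Prop
  | .sum 2 w ch =>
      (∃ i, ch 0 = .leaf i true ∧ ch 1 = .leaf i false) ∧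
      0 ≤ w 0 ∧ 0 ≤ w 1 ∧ w 0 + w 1 = 1
  | _ => False

/-- Condition 3 of normality: terminal nodes are univariate distributions and
every (proper) sum node has scope of size at least 2. -/
def normal3 : SPN N → Prop
  | .leaf _ _ => False
  | .sum k w ch =>
      isStump (SPN.sum k w ch) ∨
      (2 ≤ (scope (SPN.sum k w ch)).card ∧ ∀ j, normal3 (ch j))
  | .prod _ ch => ∀ j, normal3 (ch j)

/-- A normal SPN: complete, decomposable, weight-normalized, terminal nodes are
univariate distributions, and sum nodes have scope of size at least 2. -/
def normal (S : SPN N) : Prop :=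
  complete S ∧ decomposable S ∧ weightNormalized S ∧ normal3 S

/-- The height of an SPN: length of the longest root-to-leaf path. -/
def height : SPN N → ℕ
  | .leaf _ _ => 0
  | .sum _ _ ch => 1 + Finset.univ.sup fun j => height (ch j)
  | .prod _ ch => 1 + Finset.univ.sup fun j => height (ch j)

/-- Sum layers alternate with product layers. -/
def alternating : SPN N → Prop
  | .leaf _ _ => True
  | .sum _ _ ch => ∀ j,
      (¬ ∃ (k' : ℕ) (w' : Fin k' → ℝ) (ch' : Fin k' → SPN N), ch j = SPN.sum k' w' ch') ∧
      alternating (ch j)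
  | .prod _ ch => ∀ j,
      (¬ ∃ (k' : ℕ) (ch' : Fin k' → SPN N), ch j = SPN.prod k' ch') ∧
      alternating (ch j)

/-- The number of hidden-variable parents of the observable `X` in the constructed
BN: the number of sum nodes whose scope contains `X`. -/
def parentCount : SPN N → Fin N → ℕ
  | .leaf _ _, _ => 0
  | .sum k w ch, X =>
      (if X ∈ scope (SPN.sum k w ch) then 1 else 0) + ∑ j, parentCount (ch j) X
  | .prod _ ch, X => ∑ j, parentCount (ch j) X

/-- The number of sum nodes (hidden variables of the constructed BN). -/
def countSum : SPN N → ℕ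
  | .leaf _ _ => 0
  | .sum _ _ ch => 1 + ∑ j, countSum (ch j)
  | .prod _ ch => ∑ j, countSum (ch j)

/-- Total size of the decision-stump ADDs of the hidden variables. -/
def stumpsSize : SPN N → ℕ
  | .leaf _ _ => 0
  | .sum k _ ch => (1 + k) + ∑ j, stumpsSize (ch j)
  | .prod _ ch => ∑ j, stumpsSize (ch j)

/-- Total number of edges of the bipartite BN graph: a hidden variable `H_v`
points to observable `X` iff `X ∈ scope v`. -/
def sumScopeEdges : SPN N → ℕ
  | .leaf _ _ => 0
  | .sum k w ch => (scope (SPN.sum k w ch)).card + ∑ j, sumScopeEdges (ch j)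
  | .prod _ ch => ∑ j, sumScopeEdges (ch j)

/-- Size of the ADD `A_X` of observable `X`: the size of the sub-SPN induced by
the nodes whose scope contains `X` (an upper bound on the contracted ADD). -/
def addSize : SPN N → Fin N → ℕ
  | .leaf i _, X => if i = X then 1 else 0
  | .sum k w ch, X =>
      (if X ∈ scope (SPN.sum k w ch) then
        1 + (Finset.univ.filter fun j => X ∈ scope (ch j)).card
       else 0) + ∑ j, addSize (ch j) X
  | .prod k ch, X =>
      (if X ∈ scope (SPN.prod k ch) then
        1 + (Finset.univ.filter fun j => X ∈ scope (ch j)).card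
       else 0) + ∑ j, addSize (ch j) X

end SPN

/-- A bipartite Bayesian network over `N` observable Boolean variables:
hidden (source) variables `H` with unconditional priors, and observable
variables whose CPDs are conditioned on the hidden variables. -/
structure BayesNet (N : ℕ) where
  H : Type
  fintypeH : Fintype H
  decEqH : DecidableEq H
  dom : H → ℕ
  prior : (h : H) → Fin (dom h) → ℝ
  cpd : Fin N → ((h : H) → Fin (dom h)) → Bool → ℝ

attribute [instance] BayesNet.fintypeH BayesNet.decEqH

/-- The marginal distribution of the observables in a bipartite BN: sum over all
hidden assignments of the product of all priors and all CPDs. -/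
def BayesNet.PrB {N : ℕ} (B : BayesNet N) (x : Fin N → Bool) : ℝ :=
  ∑ σ : (h : B.H) → Fin (B.dom h),
    (∏ h, B.prior h (σ h)) * ∏ i, B.cpd i σ (x i)
namespace SPN

variable {N : ℕ}

lemma eval_congr_scope (S : SPN N) {x y : Fin N → Bool}
    (h : ∀ i ∈ S.scope, x i = y i) : S.eval x = S.eval y := by
  induction S with
  | leaf i b =>
      have := h i (by simp [scope])
      simp [eval, this]
  | sum k w ch ih =>
      simp only [eval]
      refine Finset.sum_congr rfl fun j _ => ?_
      rw [ih j fun i hi => h i (by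
        simp only [scope, Finset.mem_biUnion]
        exact ⟨j, Finset.mem_univ j, hi⟩)]
  | prod k ch ih =>
      simp only [eval]
      refine Finset.prod_congr rfl fun j _ => ?_
      rw [ih j fun i hi => h i (by
        simp only [scope, Finset.mem_biUnion]
        exact ⟨j, Finset.mem_univ j, hi⟩)]

/-- Splitting a sum over all assignments of a product of two functions with
disjoint dependence. -/
lemma sum_split (A : Finset (Fin N)) (g h : (Fin N → Bool) → ℝ)
    (hg : ∀ x y, (∀ i ∈ A, x i = y i) → g x = g y)
    (hh : ∀ x y, (∀ i ∉ A, x i = y i) → h x = h y) :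
    (∑ x : Fin N → Bool, g x * h x) * (Fintype.card (Fin N → Bool) : ℝ)
      = (∑ x : Fin N → Bool, g x) * (∑ x : Fin N → Bool, h x) := by
  classical
  set e := Equiv.piEquivPiSubtypeProd (fun i : Fin N => i ∈ A) (fun _ => Bool) with he
  have key : ∀ F : (Fin N → Bool) → ℝ,
      (∑ x : Fin N → Bool, F x) = ∑ u, ∑ v, F (e.symm (u, v)) := by
    intro F
    rw [← Equiv.sum_comp e.symm, Fintype.sum_prod_type]
  have hgsplit : ∀ u v v', g (e.symm (u, v)) = g (e.symm (u, v')) := by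
    intro u v v'
    refine hg _ _ fun i hi => ?_
    simp [he, Equiv.piEquivPiSubtypeProd, hi]
  have hhsplit : ∀ u u' v, h (e.symm (u, v)) = h (e.symm (u', v)) := by
    intro u u' v
    refine hh _ _ fun i hi => ?_
    simp [he, Equiv.piEquivPiSubtypeProd, hi]
  set v₀ : {i : Fin N // ¬ i ∈ A} → Bool := fun _ => false
  set u₀ : {i : Fin N // i ∈ A} → Bool := fun _ => false
  have h1 : (∑ x : Fin N → Bool, g x * h x)
      = (∑ u, g (e.symm (u, v₀))) * (∑ v, h (e.symm (u₀, v))) := by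
    rw [key, Finset.sum_mul_sum]
    refine Finset.sum_congr rfl fun u _ => Finset.sum_congr rfl fun v _ => ?_
    rw [hgsplit u v v₀, hhsplit u u₀ v]
  have h2 : (∑ x : Fin N → Bool, g x)
      = (Fintype.card ({i : Fin N // ¬ i ∈ A} → Bool) : ℝ) * ∑ u, g (e.symm (u, v₀)) := by
    rw [key]
    rw [Finset.sum_comm]
    rw [Finset.sum_congr rfl fun v _ => Finset.sum_congr rfl fun u _ => hgsplit u v v₀]
    rw [Finset.sum_const, Finset.card_univ, nsmul_eq_mul]
  have h3 : (∑ x : Fin N → Bool, h x)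
      = (Fintype.card ({i : Fin N // i ∈ A} → Bool) : ℝ) * ∑ v, h (e.symm (u₀, v)) := by
    rw [key]
    rw [Finset.sum_congr rfl fun u _ => Finset.sum_congr rfl fun v _ => hhsplit u u₀ v]
    rw [Finset.sum_const, Finset.card_univ, nsmul_eq_mul]
  have hc : (Fintype.card ({i : Fin N // i ∈ A} → Bool) : ℝ)
      * (Fintype.card ({i : Fin N // ¬ i ∈ A} → Bool) : ℝ)
      = (Fintype.card (Fin N → Bool) : ℝ) := by
    rw [← Nat.cast_mul, ← Fintype.card_prod, Fintype.card_congr e.symm]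
  rw [h1, h2, h3, ← hc]
  ring

lemma prod_split {k : ℕ} (g : Fin k → (Fin N → Bool) → ℝ) (A : Fin k → Finset (Fin N))
    (hg : ∀ j, ∀ x y, (∀ i ∈ A j, x i = y i) → g j x = g j y)
    (hd : ∀ i j, i ≠ j → Disjoint (A i) (A j)) (s : Finset (Fin k)) :
    (∑ x : Fin N → Bool, ∏ j ∈ s, g j x) * (Fintype.card (Fin N → Bool) : ℝ) ^ s.card
      = (Fintype.card (Fin N → Bool) : ℝ) * ∏ j ∈ s, ∑ x : Fin N → Bool, g j x := by
  classical
  induction s using Finset.induction with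
  | empty => simp [Finset.sum_const, Finset.card_univ, nsmul_eq_mul]
  | @insert a s ha ih =>
      have hsplit := sum_split (A a) (g a) (fun x => ∏ j ∈ s, g j x) (hg a)
        (fun x y hxy => by
          refine Finset.prod_congr rfl fun j hj => ?_
          refine hg j x y fun i hi => ?_
          refine hxy i fun hiA => ?_
          exact Finset.disjoint_left.mp (hd a j (by rintro rfl; exact ha hj)) hiA hi)
      rw [Finset.card_insert_of_notMem ha, pow_succ]
      calc (∑ x : Fin N → Bool, ∏ j ∈ insert a s, g j x)
            * ((Fintype.card (Fin N → Bool) : ℝ) ^ s.card * (Fintype.card (Fin N → Bool) : ℝ))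
          = ((∑ x : Fin N → Bool, g a x * ∏ j ∈ s, g j x) * (Fintype.card (Fin N → Bool) : ℝ))
            * (Fintype.card (Fin N → Bool) : ℝ) ^ s.card := by
            rw [Finset.sum_congr rfl fun x _ => Finset.prod_insert ha]; ring
        _ = (∑ x : Fin N → Bool, g a x)
            * ((∑ x : Fin N → Bool, ∏ j ∈ s, g j x) * (Fintype.card (Fin N → Bool) : ℝ) ^ s.card) := by
            rw [hsplit]; ring
        _ = (Fintype.card (Fin N → Bool) : ℝ) * ∏ j ∈ insert a s, ∑ x : Fin N → Bool, g j x := by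
            rw [ih, Finset.prod_insert ha]; ring

lemma sum_eval_eq (S : SPN N) :
    (∑ x : Fin N → Bool, S.eval x)
      = (Fintype.card ({i : Fin N // ¬ i ∈ S.scope} → Bool) : ℝ) * S.val := by
  classical
  set e := Equiv.piEquivPiSubtypeProd (fun i : Fin N => i ∈ S.scope) (fun _ => Bool) with he
  rw [← Equiv.sum_comp e.symm, Fintype.sum_prod_type]
  have hag : ∀ u v, S.eval (e.symm (u, v)) = S.eval (S.extendScope u) := by
    intro u v
    refine eval_congr_scope S fun i hi => ?_
    simp [he, Equiv.piEquivPiSubtypeProd, extendScope, hi]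
  rw [Finset.sum_congr rfl fun u _ => Finset.sum_congr rfl fun v _ => hag u v]
  simp only [Finset.sum_const, Finset.card_univ, nsmul_eq_mul]
  rw [val, Finset.mul_sum]

lemma card_fun_out (A : Finset (Fin N)) :
    Fintype.card ({i : Fin N // ¬ i ∈ A} → Bool) = 2 ^ (N - A.card) := by
  classical
  rw [Fintype.card_fun, Fintype.card_bool, Fintype.card_subtype_compl,
    Fintype.card_coe, Fintype.card_fin]

lemma card_fun_all : Fintype.card (Fin N → Bool) = 2 ^ N := by
  rw [Fintype.card_fun, Fintype.card_bool, Fintype.card_fin]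

lemma val_leaf (i : Fin N) (b : Bool) : (SPN.leaf i b : SPN N).val = 1 := by
  classical
  have hmem : i ∈ (SPN.leaf i b : SPN N).scope := by simp [scope]
  haveI : Unique {x : Fin N // x ∈ (SPN.leaf i b : SPN N).scope} :=
    ⟨⟨⟨i, hmem⟩⟩, fun a => Subtype.ext (Finset.mem_singleton.mp a.2)⟩
  rw [val, Fintype.sum_equiv (Equiv.funUnique {x : Fin N // x ∈ (SPN.leaf i b : SPN N).scope} Bool)
    _ (fun b' : Bool => if b' = b then (1 : ℝ) else 0) ?_]
  · simp
  · intro y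
    have hx : (SPN.leaf i b : SPN N).extendScope y i = y default := by
      simp only [extendScope, dif_pos hmem]
      exact congrArg y (Subsingleton.elim _ _)
    simp [eval, hx, Equiv.funUnique]

lemma val_sum (k : ℕ) (w : Fin k → ℝ) (ch : Fin k → SPN N)
    (hcomp : ∀ i j, scope (ch i) = scope (ch j)) :
    (SPN.sum k w ch).val = ∑ j, w j * (ch j).val := by
  classical
  have hscope : ∀ j, scope (ch j) = scope (SPN.sum k w ch) := by
    intro j
    ext i
    simp only [scope, Finset.mem_biUnion, Finset.mem_univ, true_and]
    exact ⟨fun hi => ⟨j, hi⟩, fun ⟨j', hi⟩ => hcomp j' j ▸ hi⟩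
  set M : ℝ := (Fintype.card ({i : Fin N // ¬ i ∈ (SPN.sum k w ch).scope} → Bool) : ℝ) with hM
  have hMpos : 0 < M := by
    rw [hM]
    exact_mod_cast Fintype.card_pos
  have h1 : M * (SPN.sum k w ch).val = M * ∑ j, w j * (ch j).val := by
    rw [← sum_eval_eq]
    have : ∀ x : Fin N → Bool, (SPN.sum k w ch).eval x = ∑ j, w j * (ch j).eval x :=
      fun x => rfl
    rw [Finset.sum_congr rfl fun x _ => this x, Finset.sum_comm]
    rw [Finset.mul_sum]
    refine Finset.sum_congr rfl fun j _ => ?_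
    rw [← Finset.mul_sum, sum_eval_eq (ch j), hscope j, ← hM]
    ring
  exact mul_left_cancel₀ (ne_of_gt hMpos) h1

lemma val_prod (k : ℕ) (ch : Fin k → SPN N)
    (hdis : ∀ i j, i ≠ j → Disjoint (scope (ch i)) (scope (ch j))) :
    (SPN.prod k ch).val = ∏ j, (ch j).val := by
  classical
  have hcard : (scope (SPN.prod k ch)).card = ∑ j, (scope (ch j)).card := by
    rw [show scope (SPN.prod k ch) = Finset.univ.biUnion fun j => scope (ch j) from rfl]
    rw [Finset.card_biUnion fun i _ j _ hij => hdis i j hij]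
  have hle : ∀ j, (scope (ch j)).card ≤ N := fun j =>
    le_trans (Finset.card_le_univ _) (le_of_eq (Fintype.card_fin N))
  have hle' : (scope (SPN.prod k ch)).card ≤ N :=
    le_trans (Finset.card_le_univ _) (le_of_eq (Fintype.card_fin N))
  have hsplit := prod_split (fun j => (ch j).eval) (fun j => scope (ch j))
    (fun j x y hxy => eval_congr_scope (ch j) hxy) hdis Finset.univ
  rw [Finset.card_univ, Fintype.card_fin] at hsplit
  have hev : ∀ x : Fin N → Bool, (∏ j, (ch j).eval x) = (SPN.prod k ch).eval x := fun x => rfl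
  rw [Finset.sum_congr rfl fun x _ => hev x, sum_eval_eq] at hsplit
  rw [Finset.prod_congr rfl fun j _ => sum_eval_eq (ch j)] at hsplit
  rw [Finset.prod_mul_distrib] at hsplit
  -- cardinal identity
  have hkey : ((Fintype.card ({i : Fin N // ¬ i ∈ (SPN.prod k ch).scope} → Bool) : ℝ))
      * (Fintype.card (Fin N → Bool) : ℝ) ^ k
      = (Fintype.card (Fin N → Bool) : ℝ)
        * ∏ j, (Fintype.card ({i : Fin N // ¬ i ∈ (ch j).scope} → Bool) : ℝ) := by
    have hnat : (2 : ℕ) ^ (N - (scope (SPN.prod k ch)).card) * ((2 : ℕ) ^ N) ^ k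
        = 2 ^ N * ∏ j, (2 : ℕ) ^ (N - (scope (ch j)).card) := by
      have hcancel : ∀ m : ℕ, m ≤ N → (2 : ℕ) ^ (N - m) * 2 ^ m = 2 ^ N := by
        intro m hm
        rw [← pow_add, Nat.sub_add_cancel hm]
      have h2 : (∏ j, (2 : ℕ) ^ (N - (scope (ch j)).card)) * 2 ^ ∑ j, (scope (ch j)).card
          = (2 ^ N) ^ k := by
        rw [← Finset.prod_pow_eq_pow_sum, ← Finset.prod_mul_distrib]
        rw [Finset.prod_congr rfl fun j _ => hcancel _ (hle j)]
        rw [Finset.prod_const, Finset.card_univ, Fintype.card_fin]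
      have hpos : (0 : ℕ) < 2 ^ (scope (SPN.prod k ch)).card := pow_pos (by norm_num) _
      apply Nat.eq_of_mul_eq_mul_right hpos
      calc (2 : ℕ) ^ (N - (scope (SPN.prod k ch)).card) * ((2 : ℕ) ^ N) ^ k
            * 2 ^ (scope (SPN.prod k ch)).card
          = ((2:ℕ) ^ (N - (scope (SPN.prod k ch)).card) * 2 ^ (scope (SPN.prod k ch)).card)
            * (2 ^ N) ^ k := by ring
        _ = 2 ^ N * (2 ^ N) ^ k := by rw [hcancel _ hle']
        _ = 2 ^ N * ((∏ j, (2 : ℕ) ^ (N - (scope (ch j)).card))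
              * 2 ^ ∑ j, (scope (ch j)).card) := by rw [h2]
        _ = (2 ^ N * ∏ j, (2 : ℕ) ^ (N - (scope (ch j)).card))
              * 2 ^ (scope (SPN.prod k ch)).card := by rw [hcard]; ring
    rw [card_fun_out, card_fun_all]
    rw [Finset.prod_congr rfl fun j _ => by rw [card_fun_out (scope (ch j))]]
    exact_mod_cast congrArg (Nat.cast (R := ℝ)) hnat
  have hpos : (0 : ℝ) < ((Fintype.card ({i : Fin N // ¬ i ∈ (SPN.prod k ch).scope} → Bool) : ℝ))
      * (Fintype.card (Fin N → Bool) : ℝ) ^ k := by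
    apply mul_pos
    · exact_mod_cast Fintype.card_pos
    · exact pow_pos (by exact_mod_cast Fintype.card_pos) k
  apply mul_left_cancel₀ (ne_of_gt hpos)
  calc ((Fintype.card ({i : Fin N // ¬ i ∈ (SPN.prod k ch).scope} → Bool) : ℝ))
        * (Fintype.card (Fin N → Bool) : ℝ) ^ k * (SPN.prod k ch).val
      = ((Fintype.card ({i : Fin N // ¬ i ∈ (SPN.prod k ch).scope} → Bool) : ℝ)
          * (SPN.prod k ch).val) * (Fintype.card (Fin N → Bool) : ℝ) ^ k := by ring
    _ = (Fintype.card (Fin N → Bool) : ℝ)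
          * ((∏ j, (Fintype.card ({i : Fin N // ¬ i ∈ (ch j).scope} → Bool) : ℝ))
            * ∏ j, (ch j).val) := by
        rw [hsplit]
    _ = ((Fintype.card ({i : Fin N // ¬ i ∈ (SPN.prod k ch).scope} → Bool) : ℝ))
        * (Fintype.card (Fin N → Bool) : ℝ) ^ k * ∏ j, (ch j).val := by
        rw [← mul_assoc, ← hkey]

end SPN

/-- For every node `v` of a complete and decomposable SPN,
`val v := Σ_{assignments of scope v} f_v` equals: `1` if `v` is an indicator
leaf; `∏_{c ∈ Ch(v)} val c` if `v` is a product node; and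
`Σ_{c ∈ Ch(v)} w_{v,c} · val c` if `v` is a sum node. -/
theorem spn_val_recursion {N : ℕ} (S : SPN N)
    (hc : S.complete) (hd : S.decomposable) :
    (∀ (i : Fin N) (b : Bool), S = SPN.leaf i b → S.val = 1) ∧
    (∀ (k : ℕ) (ch : Fin k → SPN N), S = SPN.prod k ch →
      S.val = ∏ j, (ch j).val) ∧
    (∀ (k : ℕ) (w : Fin k → ℝ) (ch : Fin k → SPN N), S = SPN.sum k w ch →
      S.val = ∑ j, w j * (ch j).val) := by
  refine ⟨?_, ?_, ?_⟩
  · rintro i b rfl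
    exact SPN.val_leaf i b
  · rintro k ch rfl
    obtain ⟨h1, -⟩ := hd
    exact SPN.val_prod k ch h1
  · rintro k w ch rfl
    obtain ⟨h1, -⟩ := hc
    exact SPN.val_sum k w ch h1
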